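/- Strong LP duality for the abstract transformer of a sequential statement: fix a real bound vector d : Fin m → ℝ and suppose the primal is feasible, i.e. there exist x : Fin n → ℝ, x' : Fin n → ℝ, x'' : Fin q → ℝ with T.mulVec x ≤ d and A.mulVec x + A'.mulVec x' + A''.mulVec x'' ≤ b. Then, as elements of EReal, ⨆ {(((T.mulVec x') i : ℝ) : EReal) | ∃ x x'', T.mulVec x ≤ d ∧ A.mulVec x + A'.mulVec x' + A''.mulVec x'' ≤ b} = ⨅ {((∑ j, d j * y₁ j + ∑ k, b k * y₂ k : ℝ) : EReal) | y₁ : Fin m → ℝ, y₂ : Fin p → ℝ, 0 ≤ y₁, 0 ≤ y₂, Tᵀ.mulVec y₁ + Aᵀ.mulVec y₂ = 0, (A'')ᵀ.mulVec y₂ = 0, (A')ᵀ.mulVec y₂ = (fun j => T i j)} (in particular, the infimum over the empty set is +∞, matching an unbounded primal). -/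

import Mathlib

open Matrix Finset RealInnerProductSpace


section ConeClosed
variable {ι : Type*} [Fintype ι] {E : Type*} [NormedAddCommGroup E]
  [InnerProductSpace ℝ E] [FiniteDimensional ℝ E]

lemma cone_caratheodory (v : ι → E) :
    ∀ N : ℕ, ∀ c : ι → ℝ, 0 ≤ c → (Finset.univ.filter (fun i => c i ≠ 0)).card ≤ N →
    ∃ (S : Finset ι) (c' : ι → ℝ), LinearIndependent ℝ (fun i : S => v i) ∧ 0 ≤ c' ∧
      (∀ i, i ∉ S → c' i = 0) ∧ ∑ i, c' i • v i = ∑ i, c i • v i := by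
  classical
  intro N
  induction N with
  | zero =>
    intro c hc hcard
    have hc0 : ∀ i, c i = 0 := by
      intro i
      by_contra hi
      have : i ∈ Finset.univ.filter (fun i => c i ≠ 0) := by simp [hi]
      have := Finset.card_pos.mpr ⟨i, this⟩
      omega
    refine ⟨∅, c, ?_, hc, fun i _ => hc0 i, rfl⟩
    have : IsEmpty ((∅ : Finset ι) : Type _) := by
      simp only [Finset.isEmpty_coe_sort]
    exact linearIndependent_empty_type
  | succ N ih =>
    intro c hc hcard
    set S := Finset.univ.filter (fun i => c i ≠ 0) with hS
    by_cases hind : LinearIndependent ℝ (fun i : S => v i)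
    · refine ⟨S, c, hind, hc, fun i hi => ?_, rfl⟩
      simpa [hS] using hi
    · obtain ⟨w, hwsum, i0, hi0⟩ := Fintype.not_linearIndependent_iff.mp hind
      set w' : ι → ℝ := fun i => if h : i ∈ S then w ⟨i, h⟩ else 0 with hw'
      have hw'S : ∀ i, i ∉ S → w' i = 0 := fun i hi => by simp [hw', hi]
      have hw'sum : ∑ i, w' i • v i = 0 := by
        rw [← Finset.sum_subset (Finset.subset_univ S)
          (fun i _ hi => by rw [hw'S i hi, zero_smul]),
          ← Finset.sum_coe_sort S (fun i => w' i • v i)]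
        simpa [hw'] using hwsum
      have hw'i0 : w' (i0 : ι) ≠ 0 := by simpa [hw'] using hi0
      obtain ⟨u, hu0, huS, ⟨i2, hi2⟩⟩ :
          ∃ u : ι → ℝ, ∑ i, u i • v i = 0 ∧ (∀ i, i ∉ S → u i = 0) ∧ ∃ i, 0 < u i := by
        by_cases hpos : ∃ i, 0 < w' i
        · exact ⟨w', hw'sum, hw'S, hpos⟩
        · push_neg at hpos
          refine ⟨-w', by simpa using hw'sum, fun i hi => by simp [hw'S i hi], i0, ?_⟩
          have := hpos i0
          simp only [Pi.neg_apply]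
          rcases lt_or_eq_of_le this with h | h
          · linarith
          · exact absurd h hw'i0
      set T := Finset.univ.filter (fun i => 0 < u i) with hT
      have hi2T : i2 ∈ T := by simp [hT, hi2]
      obtain ⟨i1, hi1T, hmin⟩ := Finset.exists_min_image T (fun i => c i / u i) ⟨i2, hi2T⟩
      have hui1 : 0 < u i1 := by simpa [hT] using hi1T
      set t := c i1 / u i1 with htdef
      have ht : 0 ≤ t := div_nonneg (hc i1) hui1.le
      set c' : ι → ℝ := fun i => c i - t * u i with hc'def
      have hc' : 0 ≤ c' := by
        intro i
        simp only [hc'def, Pi.zero_apply]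
        by_cases hui : 0 < u i
        · have h1 : t ≤ c i / u i := hmin i (by simp [hT, hui])
          have h2 : t * u i ≤ c i := (le_div_iff₀ hui).mp h1
          linarith
        · push_neg at hui
          have h3 : (0:ℝ) ≤ c i := hc i
          nlinarith [mul_nonneg ht (neg_nonneg.mpr hui)]
      have hc'i1 : c' i1 = 0 := by
        simp only [hc'def, htdef]
        field_simp
        ring
      have hi1S : i1 ∈ S := by
        by_contra hi1S
        exact absurd (huS i1 hi1S) hui1.ne'
      have hsub : Finset.univ.filter (fun i => c' i ≠ 0) ⊆ S.erase i1 := by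
        intro i hi
        simp only [Finset.mem_filter, Finset.mem_univ, true_and] at hi
        refine Finset.mem_erase.mpr ⟨?_, ?_⟩
        · rintro rfl; exact hi hc'i1
        · by_contra hiS
          exact hi (by simp [hc'def, (by simpa [hS] using hiS : c i = 0), huS i hiS])
      have hcard' : (Finset.univ.filter (fun i => c' i ≠ 0)).card ≤ N := by
        calc (Finset.univ.filter (fun i => c' i ≠ 0)).card ≤ (S.erase i1).card :=
              Finset.card_le_card hsub
          _ = S.card - 1 := Finset.card_erase_of_mem hi1S
          _ ≤ N := by omega
      have hsum' : ∑ i, c' i • v i = ∑ i, c i • v i := by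
        have heach : ∀ i, c' i • v i = c i • v i - t • (u i • v i) := fun i => by
          simp [hc'def, sub_smul, smul_smul]
        rw [Finset.sum_congr rfl (fun i _ => heach i), Finset.sum_sub_distrib,
          ← Finset.smul_sum, hu0, smul_zero, sub_zero]
      obtain ⟨S'', c'', h1, h2, h3, h4⟩ := ih c' hc' hcard'
      exact ⟨S'', c'', h1, h2, h3, h4.trans hsum'⟩

lemma isClosed_coneGen (v : ι → E) :
    IsClosed {x : E | ∃ c : ι → ℝ, 0 ≤ c ∧ x = ∑ i, c i • v i} := by
  classical
  have key : {x : E | ∃ c : ι → ℝ, 0 ≤ c ∧ x = ∑ i, c i • v i} =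
      ⋃ (S : Finset ι) (_ : LinearIndependent ℝ (fun i : S => v i)),
        (fun c : S → ℝ => ∑ i, c i • v (i : ι)) '' {c | 0 ≤ c} := by
    ext x
    simp only [Set.mem_setOf_eq, Set.mem_iUnion, Set.mem_image]
    constructor
    · rintro ⟨c, hc, rfl⟩
      obtain ⟨S, c', hli, hc', hS, hsum⟩ :=
        cone_caratheodory v (Finset.univ.filter (fun i => c i ≠ 0)).card c hc le_rfl
      refine ⟨S, hli, fun i => c' i, fun i => hc' i, ?_⟩
      rw [← hsum, ← Finset.sum_subset (Finset.subset_univ S)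
        (fun i _ hi => by rw [hS i hi, zero_smul])]
      exact Finset.sum_coe_sort S (fun i => c' i • v i)
    · rintro ⟨S, hli, c, hc, rfl⟩
      refine ⟨fun i => if h : i ∈ S then c ⟨i, h⟩ else 0, fun i => ?_, ?_⟩
      · dsimp only; split
        · exact hc _
        · exact le_refl _
      · rw [← Finset.sum_subset (Finset.subset_univ S)
          (fun i _ hi => by simp [hi]),
          ← Finset.sum_coe_sort S (fun i => (if h : i ∈ S then c ⟨i, h⟩ else 0) • v i)]
        refine Finset.sum_congr rfl fun i _ => ?_
        simp [i.2]
  rw [key]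
  refine isClosed_iUnion_of_finite fun S => isClosed_iUnion_of_finite fun hli => ?_
  let f : (S → ℝ) →ₗ[ℝ] E :=
    { toFun := fun c => ∑ i, c i • v (i : ι)
      map_add' := fun a b => by simp [add_smul, Finset.sum_add_distrib]
      map_smul' := fun r a => by simp [smul_smul, Finset.smul_sum] }
  have hker : LinearMap.ker f = ⊥ := by
    rw [LinearMap.ker_eq_bot']
    intro g hg
    exact funext (Fintype.linearIndependent_iff.mp hli g hg)
  have himg : (fun c : S → ℝ => ∑ i, c i • v (i : ι)) '' {c | 0 ≤ c}
      = f '' Set.Ici 0 := rfl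
  rw [himg]
  exact (LinearMap.isClosedEmbedding_of_injective hker).isClosedMap _ isClosed_Ici

end ConeClosed

section Farkas
variable {ρ σ : Type*} [Fintype ρ] [Fintype σ]

-- coordinate of a sum in EuclideanSpace
lemma euclid_sum_apply {ι : Type*} [Fintype ι] (y : ι → ℝ) (f : ι → EuclideanSpace ℝ σ)
    (j : σ) : (∑ i, y i • f i) j = ∑ i, y i * f i j := by
  induction (Finset.univ : Finset ι) using Finset.cons_induction with
  | empty => rfl
  | cons a s ha ih => rw [Finset.sum_cons, Finset.sum_cons, ← ih]; rfl

lemma euclid_inner (x y : EuclideanSpace ℝ σ) : ⟪x, y⟫ = ∑ i, x i * y i := by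
  simp [PiLp.inner_apply, RCLike.inner_apply, mul_comm]

lemma farkas_cone (M : Matrix ρ σ ℝ) (c : σ → ℝ)
    (h : ¬ ∃ y : ρ → ℝ, 0 ≤ y ∧ Mᵀ.mulVec y = c) :
    ∃ u : σ → ℝ, (∀ i, 0 ≤ M.mulVec u i) ∧ c ⬝ᵥ u < 0 := by
  classical
  set E := EuclideanSpace ℝ σ
  set v : ρ → E := fun i => (WithLp.toLp 2 (M i) : E) with hv
  set K : ConvexCone ℝ E :=
    { carrier := {x : E | ∃ y : ρ → ℝ, 0 ≤ y ∧ x = ∑ i, y i • v i}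
      smul_mem' := by
        rintro t ht x ⟨y, hy, rfl⟩
        exact ⟨t • y, smul_nonneg ht.le hy, by
          rw [Finset.smul_sum]
          exact Finset.sum_congr rfl fun i _ => (smul_assoc t (y i) (v i)).symm⟩
      add_mem' := by
        rintro x ⟨y, hy, rfl⟩ x' ⟨y', hy', rfl⟩
        exact ⟨y + y', add_nonneg hy hy', by
          rw [← Finset.sum_add_distrib]
          exact Finset.sum_congr rfl fun i _ => (add_smul (y i) (y' i) (v i)).symm⟩ } with hK
  have hne : (K : Set E).Nonempty := ⟨0, 0, le_refl 0, by simp⟩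
  have hcl : IsClosed (K : Set E) := isClosed_coneGen v
  have hmem : (WithLp.toLp 2 c : E) ∉ K := by
    rintro ⟨y, hy, hyc⟩
    refine h ⟨y, hy, funext fun j => ?_⟩
    have : (WithLp.toLp 2 c : E) j = (∑ i, y i • v i) j := by rw [hyc]
    rw [euclid_sum_apply] at this
    rw [Matrix.mulVec, dotProduct]
    rw [show c j = ∑ i, y i * M i j from this]
    exact Finset.sum_congr rfl fun i _ => by rw [Matrix.transpose_apply, mul_comm]
  obtain ⟨u, hu1, hu2⟩ : ∃ u : E, (∀ x ∈ K, 0 ≤ ⟪u, x⟫) ∧ ⟪u, (WithLp.toLp 2 c : E)⟫ < 0 := by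
    let C : ProperCone ℝ E :=
      { carrier := (K : Set E)
        add_mem' := fun ha hb => K.add_mem ha hb
        zero_mem' := ⟨0, le_refl 0, by simp⟩
        smul_mem' := by
          rintro t x ⟨y, hy, rfl⟩
          exact ⟨(t : ℝ) • y, smul_nonneg t.2 hy, by
            rw [Finset.smul_sum]
            exact Finset.sum_congr rfl fun i _ => (smul_assoc t (y i) (v i)).symm⟩
        isClosed' := hcl }
    obtain ⟨u, h1, h2⟩ := C.hyperplane_separation' (x₀ := (WithLp.toLp 2 c : E)) hmem
    exact ⟨u, fun x hx => by rw [real_inner_comm]; exact h1 x hx, by rw [real_inner_comm]; exact h2⟩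
  refine ⟨u.ofLp, fun i => ?_, ?_⟩
  · have hvi : v i ∈ K := ⟨Pi.single i 1, by
      intro i'; by_cases hii : i' = i <;> simp [Pi.single_apply, hii], by
      rw [Finset.sum_eq_single i (fun i' _ hii => by simp [Pi.single_apply, hii])
        (fun hmem => absurd (Finset.mem_univ i) hmem)]
      simp⟩
    have := hu1 _ hvi
    rw [euclid_inner] at this
    simpa [Matrix.mulVec, dotProduct, hv, mul_comm] using this
  · rw [euclid_inner] at hu2
    have : c ⬝ᵥ u = ∑ j, u j * c j := by
      rw [dotProduct]; exact Finset.sum_congr rfl fun j _ => mul_comm _ _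
    rw [this]; exact hu2

lemma farkas_infeasible [DecidableEq ρ] (M : Matrix ρ σ ℝ) (bb : ρ → ℝ)
    (h : ¬ ∃ x : σ → ℝ, M.mulVec x ≤ bb) :
    ∃ y : ρ → ℝ, 0 ≤ y ∧ Mᵀ.mulVec y = 0 ∧ bb ⬝ᵥ y < 0 := by
  classical
  set N : Matrix ((σ ⊕ σ) ⊕ ρ) ρ ℝ :=
    Matrix.of (fun k i => Sum.elim (Sum.elim (fun j => M i j) (fun j => - M i j))
      (fun i' => if i' = i then 1 else 0) k) with hN
  have hinf : ¬ ∃ yy : ((σ ⊕ σ) ⊕ ρ) → ℝ, 0 ≤ yy ∧ Nᵀ.mulVec yy = bb := by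
    rintro ⟨yy, hyy, hyb⟩
    refine h ⟨fun j => yy (Sum.inl (Sum.inl j)) - yy (Sum.inl (Sum.inr j)), fun i => ?_⟩
    have hthis := congrFun hyb i
    rw [Matrix.mulVec, dotProduct, Fintype.sum_sum_type, Fintype.sum_sum_type] at hthis
    simp only [Matrix.transpose_apply, hN, Matrix.of_apply, Sum.elim_inl, Sum.elim_inr,
      neg_mul, Finset.sum_neg_distrib] at hthis
    rw [Finset.sum_eq_single i (fun i' _ hii => by simp [hii]) (by simp)] at hthis
    norm_num at hthis
    have hx : M.mulVec (fun j => yy (Sum.inl (Sum.inl j)) - yy (Sum.inl (Sum.inr j))) i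
        = ∑ j, M i j * yy (Sum.inl (Sum.inl j)) - ∑ j, M i j * yy (Sum.inl (Sum.inr j)) := by
      simp [Matrix.mulVec, dotProduct, mul_sub, Finset.sum_sub_distrib]
    have h4 : (0:ℝ) ≤ yy (Sum.inr i) := hyy _
    rw [hx]
    linarith
  obtain ⟨u, hu1, hu2⟩ := farkas_cone N bb hinf
  refine ⟨u, fun i => ?_, funext fun j => ?_, hu2⟩
  · have hthis := hu1 (Sum.inr i)
    simp only [Matrix.mulVec, dotProduct, hN, Matrix.of_apply, Sum.elim_inr] at hthis
    rw [Finset.sum_eq_single i (fun i' _ hii => by simp [Ne.symm hii]) (by simp)] at hthis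
    simpa using hthis
  · have h1 := hu1 (Sum.inl (Sum.inl j))
    have h2 := hu1 (Sum.inl (Sum.inr j))
    simp only [Matrix.mulVec, dotProduct, hN, Matrix.of_apply, Sum.elim_inl,
      Sum.elim_inr, neg_mul, Finset.sum_neg_distrib] at h1 h2
    have hmv : Mᵀ.mulVec u j = ∑ i, M i j * u i := by
      rw [Matrix.mulVec, dotProduct]
      exact Finset.sum_congr rfl fun i _ => by rw [Matrix.transpose_apply]
    rw [hmv, Pi.zero_apply]
    linarith

end Farkas


theorem lp_duality {ρ σ : Type*} [Fintype ρ] [Fintype σ] [DecidableEq ρ]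
    (M : Matrix ρ σ ℝ) (bb : ρ → ℝ) (c : σ → ℝ) (hfeas : ∃ x, M.mulVec x ≤ bb) :
    sSup {v : EReal | ∃ x, M.mulVec x ≤ bb ∧ v = ((c ⬝ᵥ x : ℝ) : EReal)} =
    sInf {w : EReal | ∃ y, 0 ≤ y ∧ Mᵀ.mulVec y = c ∧ w = ((bb ⬝ᵥ y : ℝ) : EReal)} := by
  classical
  obtain ⟨x₀, hx₀⟩ := hfeas
  set P : Set EReal := {v | ∃ x, M.mulVec x ≤ bb ∧ v = ((c ⬝ᵥ x : ℝ) : EReal)} with hP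
  set D : Set EReal := {w | ∃ y, 0 ≤ y ∧ Mᵀ.mulVec y = c ∧ w = ((bb ⬝ᵥ y : ℝ) : EReal)} with hD
  by_cases hdual : ∃ y : ρ → ℝ, 0 ≤ y ∧ Mᵀ.mulVec y = c
  · -- dual feasible
    obtain ⟨y₀, hy₀n, hy₀e⟩ := hdual
    -- weak duality
    have weak : ∀ x y, M.mulVec x ≤ bb → 0 ≤ y → Mᵀ.mulVec y = c → c ⬝ᵥ x ≤ bb ⬝ᵥ y := by
      intro x y hx hy hyc
      calc c ⬝ᵥ x = (Mᵀ.mulVec y) ⬝ᵥ x := by rw [hyc]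
        _ = (y ᵥ* M) ⬝ᵥ x := by rw [Matrix.mulVec_transpose]
        _ = y ⬝ᵥ (M.mulVec x) := (Matrix.dotProduct_mulVec y M x).symm
        _ ≤ y ⬝ᵥ bb := dotProduct_le_dotProduct_of_nonneg_left hx hy
        _ = bb ⬝ᵥ y := dotProduct_comm y bb
    have hweak : sSup P ≤ sInf D := by
      refine sSup_le fun v hv => le_sInf fun w hw => ?_
      obtain ⟨x, hx, rfl⟩ := hv
      obtain ⟨y, hy, hyc, rfl⟩ := hw
      exact EReal.coe_le_coe_iff.mpr (weak x y hx hy hyc)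
    refine le_antisymm hweak ?_
    have hmemP : ((c ⬝ᵥ x₀ : ℝ) : EReal) ∈ P := ⟨x₀, hx₀, rfl⟩
    have hmemD : ((bb ⬝ᵥ y₀ : ℝ) : EReal) ∈ D := ⟨y₀, hy₀n, hy₀e, rfl⟩
    have hsupne : sSup P ≠ ⊥ := by
      intro hbot
      have := le_sSup hmemP
      rw [hbot] at this
      exact absurd (le_bot_iff.mp this) (EReal.coe_ne_bot _)
    have hsupnt : sSup P ≠ ⊤ := by
      intro htop
      have h1 := hweak
      rw [htop, top_le_iff] at h1
      have := sInf_le hmemD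
      rw [h1] at this
      exact absurd (top_le_iff.mp this) (EReal.coe_ne_top _)
    obtain ⟨s, hs⟩ : ∃ s : ℝ, sSup P = (s : EReal) :=
      ⟨(sSup P).toReal, (EReal.coe_toReal hsupnt hsupne).symm⟩
    -- approximation
    have happrox : ∀ ε : ℝ, 0 < ε → sInf D ≤ ((s + ε : ℝ) : EReal) := by
      intro ε hε
      set G : Matrix (ρ ⊕ Unit) σ ℝ :=
        Matrix.of (Sum.elim (fun i => M i) (fun _ => fun j => - c j)) with hG
      set rhs : ρ ⊕ Unit → ℝ := Sum.elim bb (fun _ => -(s+ε)) with hrhs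
      have hGinf : ¬ ∃ x : σ → ℝ, G.mulVec x ≤ rhs := by
        rintro ⟨x, hx⟩
        have hx1 : M.mulVec x ≤ bb := fun i => hx (Sum.inl i)
        have hx2 : (s + ε) ≤ c ⬝ᵥ x := by
          have := hx (Sum.inr ())
          simp only [hG, hrhs, Matrix.mulVec, Matrix.of_apply, Sum.elim_inr] at this
          have h2 : (fun j => -c j) ⬝ᵥ x = -(c ⬝ᵥ x) := by
            simp [dotProduct, Finset.sum_neg_distrib]
          rw [h2] at this
          linarith
        have hmemx : ((c ⬝ᵥ x : ℝ) : EReal) ∈ P := ⟨x, hx1, rfl⟩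
        have hle := le_sSup hmemx
        rw [hs] at hle
        have := EReal.coe_le_coe_iff.mp hle
        linarith
      obtain ⟨yt, hytn, hyte, hytv⟩ := farkas_infeasible G rhs hGinf
      set y := fun i => yt (Sum.inl i) with hy
      set t := yt (Sum.inr ()) with ht
      have hyn : (0 : ρ → ℝ) ≤ y := fun i => hytn (Sum.inl i)
      have htn : 0 ≤ t := hytn (Sum.inr ())
      have hcol : ∀ j, Mᵀ.mulVec y j = t * c j := by
        intro j
        have := congrFun hyte j
        rw [Matrix.mulVec, dotProduct, Fintype.sum_sum_type] at this
        simp only [Matrix.transpose_apply, hG, Matrix.of_apply, Sum.elim_inl, Sum.elim_inr,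
          Finset.univ_unique, Finset.sum_singleton, Pi.zero_apply] at this
        have hmv : Mᵀ.mulVec y j = ∑ i, M i j * y i := by
          rw [Matrix.mulVec, dotProduct]
          exact Finset.sum_congr rfl fun i _ => by rw [Matrix.transpose_apply]
        rw [hmv]
        rw [hy]
        linarith [this]
      have hval : bb ⬝ᵥ y - (s + ε) * t < 0 := by
        rw [dotProduct, Fintype.sum_sum_type] at hytv
        simp only [hrhs, Sum.elim_inl, Sum.elim_inr, Finset.univ_unique,
          Finset.sum_singleton] at hytv
        have hby : bb ⬝ᵥ y = ∑ i, bb i * yt (Sum.inl i) := rfl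
        have hbt : t = yt (Sum.inr ()) := rfl
        rw [hby, hbt]
        linarith [hytv]
      rcases eq_or_lt_of_le htn with htz | htp
      · -- t = 0 : contradiction with primal feasibility
        exfalso
        have hMy : Mᵀ.mulVec y = 0 := funext fun j => by rw [hcol j, ← htz]; simp
        have h1 : y ⬝ᵥ (M.mulVec x₀) ≤ y ⬝ᵥ bb :=
          dotProduct_le_dotProduct_of_nonneg_left hx₀ hyn
        have h2 : y ⬝ᵥ (M.mulVec x₀) = (Mᵀ.mulVec y) ⬝ᵥ x₀ := by
          rw [Matrix.dotProduct_mulVec, Matrix.mulVec_transpose]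
        rw [h2, hMy, zero_dotProduct] at h1
        have h3 : bb ⬝ᵥ y = y ⬝ᵥ bb := dotProduct_comm bb y
        have h4 : (s + ε) * t = 0 := by rw [← htz]; ring
        linarith [hval, h1]
      · -- t > 0 : scale
        set y' := t⁻¹ • y with hy'
        have hy'n : (0 : ρ → ℝ) ≤ y' := fun i => by
          have := hyn i
          simp only [hy', Pi.smul_apply, smul_eq_mul]
          have h0 : (0:ℝ) ≤ y i := this
          exact mul_nonneg (inv_nonneg.mpr htn) h0
        have hy'c : Mᵀ.mulVec y' = c := by
          funext j
          rw [hy', Matrix.mulVec_smul]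
          simp only [Pi.smul_apply, smul_eq_mul]
          rw [hcol j]
          field_simp
        have hy'v : bb ⬝ᵥ y' ≤ s + ε := by
          have : bb ⬝ᵥ y' = t⁻¹ * (bb ⬝ᵥ y) := by
            rw [hy', dotProduct_smul]
            simp
          rw [this]
          have h5 : bb ⬝ᵥ y ≤ (s + ε) * t := by linarith [hval]
          calc t⁻¹ * (bb ⬝ᵥ y) ≤ t⁻¹ * ((s + ε) * t) :=
                mul_le_mul_of_nonneg_left h5 (inv_nonneg.mpr htn)
            _ = s + ε := by field_simp
        calc sInf D ≤ ((bb ⬝ᵥ y' : ℝ) : EReal) := sInf_le ⟨y', hy'n, hy'c, rfl⟩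
          _ ≤ ((s + ε : ℝ) : EReal) := EReal.coe_le_coe_iff.mpr hy'v
    -- conclude sInf D ≤ s
    rw [hs]
    have hinfnt : sInf D ≠ ⊤ := by
      intro htop
      have := happrox 1 one_pos
      rw [htop, top_le_iff] at this
      exact absurd this (EReal.coe_ne_top _)
    rcases eq_or_ne (sInf D) ⊥ with hbot | hnbot
    · rw [hbot]; exact bot_le
    obtain ⟨si, hsi⟩ : ∃ si : ℝ, sInf D = (si : EReal) :=
      ⟨(sInf D).toReal, (EReal.coe_toReal hinfnt hnbot).symm⟩
    rw [hsi, EReal.coe_le_coe_iff]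
    apply le_of_forall_pos_le_add
    intro ε hε
    have := happrox ε hε
    rw [hsi] at this
    exact_mod_cast EReal.coe_le_coe_iff.mp this
  · -- dual infeasible : both sides ⊤
    have hDempty : D = ∅ := by
      rw [Set.eq_empty_iff_forall_notMem]
      rintro w ⟨y, hy, hyc, rfl⟩
      exact hdual ⟨y, hy, hyc⟩
    rw [hDempty, sInf_empty]
    rw [sSup_eq_top]
    intro w hw
    obtain ⟨u, hu1, hu2⟩ := farkas_cone M c hdual
    set dir := -u with hdir
    have hdirle : ∀ i, M.mulVec dir i ≤ 0 := by
      intro i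
      rw [hdir, Matrix.mulVec_neg]
      simpa using hu1 i
    have hdirpos : 0 < c ⬝ᵥ dir := by
      rw [hdir, dotProduct_neg]
      linarith
    induction w with
    | bot =>
      exact ⟨((c ⬝ᵥ x₀ : ℝ) : EReal), ⟨x₀, hx₀, rfl⟩, bot_lt_iff_ne_bot.mpr (EReal.coe_ne_bot _)⟩
    | coe r =>
      set t := max 0 ((r + 1 - c ⬝ᵥ x₀) / (c ⬝ᵥ dir)) with htd
      have htn : 0 ≤ t := le_max_left _ _
      set x := x₀ + t • dir with hx
      have hxf : M.mulVec x ≤ bb := by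
        intro i
        rw [hx, Matrix.mulVec_add, Matrix.mulVec_smul]
        have := hx₀ i
        have h2 := hdirle i
        simp only [Pi.add_apply, Pi.smul_apply, smul_eq_mul]
        nlinarith
      have hxv : r < c ⬝ᵥ x := by
        rw [hx, dotProduct_add, dotProduct_smul]
        have h1 : (r + 1 - c ⬝ᵥ x₀) / (c ⬝ᵥ dir) ≤ t := le_max_right _ _
        have h2 : r + 1 - c ⬝ᵥ x₀ ≤ t * (c ⬝ᵥ dir) := by
          rw [div_le_iff₀ hdirpos] at h1
          linarith
        simp only [smul_eq_mul]
        linarith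
      exact ⟨((c ⬝ᵥ x : ℝ) : EReal), ⟨x, hxf, rfl⟩, EReal.coe_lt_coe_iff.mpr hxv⟩
    | top => exact absurd hw (lt_irrefl _)

theorem absSem_sequential_strong_duality {m n p q : ℕ} (T : Matrix (Fin m) (Fin n) ℝ)
    (A A' : Matrix (Fin p) (Fin n) ℝ) (A'' : Matrix (Fin p) (Fin q) ℝ)
    (b : Fin p → ℝ) (i : Fin m) (d : Fin m → ℝ)
    (hfeas : ∃ x x' : Fin n → ℝ, ∃ x'' : Fin q → ℝ,
      T.mulVec x ≤ d ∧ A.mulVec x + A'.mulVec x' + A''.mulVec x'' ≤ b) :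
    sSup {v : EReal | ∃ x' : Fin n → ℝ, ∃ x : Fin n → ℝ, ∃ x'' : Fin q → ℝ,
        T.mulVec x ≤ d ∧ A.mulVec x + A'.mulVec x' + A''.mulVec x'' ≤ b ∧
        v = (((T.mulVec x') i : ℝ) : EReal)}
      =
    sInf {w : EReal | ∃ y₁ : Fin m → ℝ, ∃ y₂ : Fin p → ℝ,
        0 ≤ y₁ ∧ 0 ≤ y₂ ∧
        Tᵀ.mulVec y₁ + Aᵀ.mulVec y₂ = 0 ∧
        (A'')ᵀ.mulVec y₂ = 0 ∧
        (A')ᵀ.mulVec y₂ = (fun j => T i j) ∧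
        w = ((∑ j, d j * y₁ j + ∑ k, b k * y₂ k : ℝ) : EReal)} := by
  classical
  set M : Matrix (Fin m ⊕ Fin p) (Fin n ⊕ (Fin n ⊕ Fin q)) ℝ :=
    Matrix.of (fun r c =>
      Sum.elim (fun i' => Sum.elim (fun j => T i' j) (Sum.elim (fun _ => (0:ℝ)) (fun _ => 0)) c)
        (fun k => Sum.elim (fun j => A k j) (Sum.elim (fun j => A' k j) (fun l => A'' k l)) c) r)
    with hM
  set bb : Fin m ⊕ Fin p → ℝ := Sum.elim d b with hbb
  set cc : Fin n ⊕ (Fin n ⊕ Fin q) → ℝ :=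
    Sum.elim 0 (Sum.elim (fun j => T i j) 0) with hcc
  -- mulVec computation
  have hmv : ∀ (x x' : Fin n → ℝ) (x'' : Fin q → ℝ),
      M.mulVec (Sum.elim x (Sum.elim x' x'')) =
        Sum.elim (T.mulVec x) (A.mulVec x + A'.mulVec x' + A''.mulVec x'') := by
    intro x x' x''
    funext r
    cases r with
    | inl i' =>
      simp [hM, Matrix.mulVec, dotProduct, Fintype.sum_sum_type]
    | inr k =>
      simp [hM, Matrix.mulVec, dotProduct, Fintype.sum_sum_type]
      ring
  have hcv : ∀ (x x' : Fin n → ℝ) (x'' : Fin q → ℝ),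
      cc ⬝ᵥ (Sum.elim x (Sum.elim x' x'')) = T.mulVec x' i := by
    intro x x' x''
    simp [hcc, dotProduct, Fintype.sum_sum_type, Matrix.mulVec]
  have hmvT : ∀ (y₁ : Fin m → ℝ) (y₂ : Fin p → ℝ),
      Mᵀ.mulVec (Sum.elim y₁ y₂) =
        Sum.elim (Tᵀ.mulVec y₁ + Aᵀ.mulVec y₂)
          (Sum.elim ((A')ᵀ.mulVec y₂) ((A'')ᵀ.mulVec y₂)) := by
    intro y₁ y₂
    funext c
    rcases c with j | c
    · simp [hM, Matrix.mulVec, dotProduct, Fintype.sum_sum_type]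
    rcases c with j | l
    · simp [hM, Matrix.mulVec, dotProduct, Fintype.sum_sum_type]
    · simp [hM, Matrix.mulVec, dotProduct, Fintype.sum_sum_type]
  have hbv : ∀ (y₁ : Fin m → ℝ) (y₂ : Fin p → ℝ),
      bb ⬝ᵥ (Sum.elim y₁ y₂) = ∑ j, d j * y₁ j + ∑ k, b k * y₂ k := by
    intro y₁ y₂
    simp [hbb, dotProduct, Fintype.sum_sum_type]
  -- primal set equality
  have hPeq : {v : EReal | ∃ x' : Fin n → ℝ, ∃ x : Fin n → ℝ, ∃ x'' : Fin q → ℝ,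
        T.mulVec x ≤ d ∧ A.mulVec x + A'.mulVec x' + A''.mulVec x'' ≤ b ∧
        v = (((T.mulVec x') i : ℝ) : EReal)} =
      {v : EReal | ∃ z, M.mulVec z ≤ bb ∧ v = ((cc ⬝ᵥ z : ℝ) : EReal)} := by
    ext v
    constructor
    · rintro ⟨x', x, x'', h1, h2, rfl⟩
      refine ⟨Sum.elim x (Sum.elim x' x''), ?_, by rw [hcv]⟩
      rw [hmv]
      rintro (i' | k)
      · exact h1 i'
      · exact h2 k
    · rintro ⟨z, hz, rfl⟩
      set x := fun j => z (Sum.inl j) with hx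
      set x' := fun j => z (Sum.inr (Sum.inl j)) with hx'
      set x'' := fun l => z (Sum.inr (Sum.inr l)) with hx''
      have hzz : z = Sum.elim x (Sum.elim x' x'') := by
        funext c
        rcases c with j | (j | l) <;> rfl
      rw [hzz] at hz ⊢
      rw [hmv] at hz
      exact ⟨x', x, x'', fun i' => hz (Sum.inl i'), fun k => hz (Sum.inr k), by rw [hcv]⟩
  -- dual set equality
  have hDeq : {w : EReal | ∃ y₁ : Fin m → ℝ, ∃ y₂ : Fin p → ℝ,
        0 ≤ y₁ ∧ 0 ≤ y₂ ∧
        Tᵀ.mulVec y₁ + Aᵀ.mulVec y₂ = 0 ∧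
        (A'')ᵀ.mulVec y₂ = 0 ∧
        (A')ᵀ.mulVec y₂ = (fun j => T i j) ∧
        w = ((∑ j, d j * y₁ j + ∑ k, b k * y₂ k : ℝ) : EReal)} =
      {w : EReal | ∃ y, 0 ≤ y ∧ Mᵀ.mulVec y = cc ∧ w = ((bb ⬝ᵥ y : ℝ) : EReal)} := by
    ext w
    constructor
    · rintro ⟨y₁, y₂, hn1, hn2, he1, he2, he3, rfl⟩
      refine ⟨Sum.elim y₁ y₂, ?_, ?_, by rw [hbv]⟩
      · rintro (i' | k)
        · exact hn1 i'
        · exact hn2 k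
      · rw [hmvT]
        funext c
        rcases c with j | (j | l)
        · exact congrFun he1 j
        · exact congrFun he3 j
        · exact congrFun he2 l
    · rintro ⟨y, hyn, hyc, rfl⟩
      set y₁ := fun i' => y (Sum.inl i') with hy1
      set y₂ := fun k => y (Sum.inr k) with hy2
      have hyy : y = Sum.elim y₁ y₂ := by funext r; rcases r with i' | k <;> rfl
      rw [hyy] at hyc ⊢
      rw [hmvT] at hyc
      refine ⟨y₁, y₂, fun i' => hyn (Sum.inl i'), fun k => hyn (Sum.inr k), ?_, ?_, ?_,
        by rw [hbv]⟩
      · funext j; exact congrFun hyc (Sum.inl j)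
      · funext l; exact congrFun hyc (Sum.inr (Sum.inr l))
      · funext j; exact congrFun hyc (Sum.inr (Sum.inl j))
  rw [hPeq, hDeq]
  apply lp_duality
  obtain ⟨x, x', x'', h1, h2⟩ := hfeas
  refine ⟨Sum.elim x (Sum.elim x' x''), ?_⟩
  rw [hmv]
  rintro (i' | k)
  · exact h1 i'
  · exact h2 k
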